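/- In the alternating group A₅, the elements g₁ = (24)(35), g₂ = (13452), g₃ = (12345) satisfy g₁g₂g₃ = 1 and generate A₅; and the elements h₁ = (345), h₂ = (15432), ℓ₁ = (235) satisfy ℓ₁[h₁,h₂] = 1 and generate A₅. Moreover, the set of all conjugates of elements of ⟨g₁⟩ ∪ ⟨g₂⟩ ∪ ⟨g₃⟩ intersects the set of all conjugates of elements of ⟨ℓ₁⟩ only in the identity. -/

import Mathlib

set_option maxRecDepth 10000

open Equiv
open scoped commutatorElement

theorem aux_pow_one {x y : Perm (Fin 5)} {m : ℕ} (h : x ∈ Subgroup.zpowers y)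
    (hy : y ^ m = 1) : x ^ m = 1 := by
  obtain ⟨n, rfl⟩ := Subgroup.mem_zpowers_iff.mp h
  rw [← zpow_natCast (y ^ n) m, ← zpow_mul, mul_comm, zpow_mul, zpow_natCast, hy, one_zpow]

theorem genB_cases : ∀ σ : Perm (Fin 5), σ.support.card = 3 → (σ = c[2,3,4] ∨ σ = c[2,4,3] ∨ σ = c[1,2,3] ∨ σ = c[1,2,4] ∨ σ = c[1,3,2] ∨ σ = c[1,3,4] ∨ σ = c[1,4,2] ∨ σ = c[1,4,3] ∨ σ = c[0,1,2] ∨ σ = c[0,1,3] ∨ σ = c[0,1,4] ∨ σ = c[0,2,1] ∨ σ = c[0,2,3] ∨ σ = c[0,2,4] ∨ σ = c[0,3,1] ∨ σ = c[0,3,2] ∨ σ = c[0,3,4] ∨ σ = c[0,4,1] ∨ σ = c[0,4,2] ∨ σ = c[0,4,3]) := by decide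

theorem genB : Subgroup.closure ({c[1,3]*c[2,4], c[0,2,3,4,1], c[0,1,2,3,4]} : Set (Perm (Fin 5))) = alternatingGroup (Fin 5) := by
  apply le_antisymm
  · rw [Subgroup.closure_le]
    rintro x (rfl|rfl|rfl) <;>
      · show _ ∈ alternatingGroup (Fin 5)
        rw [Equiv.Perm.mem_alternatingGroup]; decide
  · rw [← Equiv.Perm.closure_three_cycles_eq_alternating, Subgroup.closure_le]
    intro σ hσ
    have h3 : σ.support.card = 3 := card_support_eq_three_iff.mpr hσ
    have m0 : ((c[1,3]*c[2,4]) : Perm (Fin 5)) ∈ Subgroup.closure ({c[1,3]*c[2,4], c[0,2,3,4,1], c[0,1,2,3,4]} : Set (Perm (Fin 5))) := Subgroup.subset_closure (by simp)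
    have m1 : (c[0,2,3,4,1] : Perm (Fin 5)) ∈ Subgroup.closure ({c[1,3]*c[2,4], c[0,2,3,4,1], c[0,1,2,3,4]} : Set (Perm (Fin 5))) := Subgroup.subset_closure (by simp)
    have m2 : (c[0,1,2,3,4] : Perm (Fin 5)) ∈ Subgroup.closure ({c[1,3]*c[2,4], c[0,2,3,4,1], c[0,1,2,3,4]} : Set (Perm (Fin 5))) := Subgroup.subset_closure (by simp)
    rcases genB_cases σ h3 with rfl|rfl|rfl|rfl|rfl|rfl|rfl|rfl|rfl|rfl|rfl|rfl|rfl|rfl|rfl|rfl|rfl|rfl|rfl|rfl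
    · show _ ∈ Subgroup.closure _
      rw [show (c[2,3,4] : Perm (Fin 5)) = c[0,2,3,4,1]*(c[1,3]*c[2,4])*c[0,2,3,4,1]*c[0,2,3,4,1] by decide]
      exact mul_mem (mul_mem (mul_mem (m1) m0) m1) m1
    · show _ ∈ Subgroup.closure _
      rw [show (c[2,4,3] : Perm (Fin 5)) = (c[1,3]*c[2,4])*c[0,2,3,4,1]*c[0,2,3,4,1]*(c[1,3]*c[2,4])*c[0,2,3,4,1] by decide]
      exact mul_mem (mul_mem (mul_mem (mul_mem (m0) m1) m1) m0) m1
    · show _ ∈ Subgroup.closure _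
      rw [show (c[1,2,3] : Perm (Fin 5)) = c[0,1,2,3,4]*(c[1,3]*c[2,4])*c[0,1,2,3,4]*c[0,1,2,3,4] by decide]
      exact mul_mem (mul_mem (mul_mem (m2) m0) m2) m2
    · show _ ∈ Subgroup.closure _
      rw [show (c[1,2,4] : Perm (Fin 5)) = (c[1,3]*c[2,4])*c[0,1,2,3,4]*c[0,2,3,4,1]*c[0,2,3,4,1]*c[0,2,3,4,1] by decide]
      exact mul_mem (mul_mem (mul_mem (mul_mem (m0) m2) m1) m1) m1
    · show _ ∈ Subgroup.closure _
      rw [show (c[1,3,2] : Perm (Fin 5)) = c[0,1,2,3,4]*c[0,1,2,3,4]*c[0,1,2,3,4]*c[0,2,3,4,1] by decide]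
      exact mul_mem (mul_mem (mul_mem (m2) m2) m2) m1
    · show _ ∈ Subgroup.closure _
      rw [show (c[1,3,4] : Perm (Fin 5)) = c[0,2,3,4,1]*c[0,2,3,4,1]*(c[1,3]*c[2,4])*c[0,2,3,4,1] by decide]
      exact mul_mem (mul_mem (mul_mem (m1) m1) m0) m1
    · show _ ∈ Subgroup.closure _
      rw [show (c[1,4,2] : Perm (Fin 5)) = c[0,1,2,3,4]*c[0,1,2,3,4]*c[0,2,3,4,1]*c[0,2,3,4,1] by decide]
      exact mul_mem (mul_mem (mul_mem (m2) m2) m1) m1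
    · show _ ∈ Subgroup.closure _
      rw [show (c[1,4,3] : Perm (Fin 5)) = c[0,1,2,3,4]*c[0,2,3,4,1]*c[0,2,3,4,1]*c[0,2,3,4,1] by decide]
      exact mul_mem (mul_mem (mul_mem (m2) m1) m1) m1
    · show _ ∈ Subgroup.closure _
      rw [show (c[0,1,2] : Perm (Fin 5)) = c[0,2,3,4,1]*(c[1,3]*c[2,4])*c[0,2,3,4,1] by decide]
      exact mul_mem (mul_mem (m1) m0) m1
    · show _ ∈ Subgroup.closure _
      rw [show (c[0,1,3] : Perm (Fin 5)) = (c[1,3]*c[2,4])*c[0,1,2,3,4]*c[0,2,3,4,1] by decide]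
      exact mul_mem (mul_mem (m0) m2) m1
    · show _ ∈ Subgroup.closure _
      rw [show (c[0,1,4] : Perm (Fin 5)) = (c[1,3]*c[2,4])*c[0,2,3,4,1]*c[0,2,3,4,1] by decide]
      exact mul_mem (mul_mem (m0) m1) m1
    · show _ ∈ Subgroup.closure _
      rw [show (c[0,2,1] : Perm (Fin 5)) = c[0,1,2,3,4]*c[0,1,2,3,4]*(c[1,3]*c[2,4]) by decide]
      exact mul_mem (mul_mem (m2) m2) m0
    · show _ ∈ Subgroup.closure _
      rw [show (c[0,2,3] : Perm (Fin 5)) = (c[1,3]*c[2,4])*c[0,2,3,4,1]*c[0,2,3,4,1]*c[0,2,3,4,1] by decide]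
      exact mul_mem (mul_mem (mul_mem (m0) m1) m1) m1
    · show _ ∈ Subgroup.closure _
      rw [show (c[0,2,4] : Perm (Fin 5)) = (c[1,3]*c[2,4])*c[0,2,3,4,1]*(c[1,3]*c[2,4])*c[0,1,2,3,4]*(c[1,3]*c[2,4]) by decide]
      exact mul_mem (mul_mem (mul_mem (mul_mem (m0) m1) m0) m2) m0
    · show _ ∈ Subgroup.closure _
      rw [show (c[0,3,1] : Perm (Fin 5)) = c[0,1,2,3,4]*c[0,2,3,4,1]*(c[1,3]*c[2,4]) by decide]
      exact mul_mem (mul_mem (m2) m1) m0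
    · show _ ∈ Subgroup.closure _
      rw [show (c[0,3,2] : Perm (Fin 5)) = c[0,2,3,4,1]*c[0,2,3,4,1]*(c[1,3]*c[2,4]) by decide]
      exact mul_mem (mul_mem (m1) m1) m0
    · show _ ∈ Subgroup.closure _
      rw [show (c[0,3,4] : Perm (Fin 5)) = c[0,1,2,3,4]*c[0,1,2,3,4]*c[0,1,2,3,4]*(c[1,3]*c[2,4]) by decide]
      exact mul_mem (mul_mem (mul_mem (m2) m2) m2) m0
    · show _ ∈ Subgroup.closure _
      rw [show (c[0,4,1] : Perm (Fin 5)) = c[0,1,2,3,4]*(c[1,3]*c[2,4])*c[0,1,2,3,4] by decide]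
      exact mul_mem (mul_mem (m2) m0) m2
    · show _ ∈ Subgroup.closure _
      rw [show (c[0,4,2] : Perm (Fin 5)) = c[0,2,3,4,1]*(c[1,3]*c[2,4])*c[0,1,2,3,4] by decide]
      exact mul_mem (mul_mem (m1) m0) m2
    · show _ ∈ Subgroup.closure _
      rw [show (c[0,4,3] : Perm (Fin 5)) = (c[1,3]*c[2,4])*c[0,1,2,3,4]*c[0,1,2,3,4] by decide]
      exact mul_mem (mul_mem (m0) m2) m2

theorem genD_cases : ∀ σ : Perm (Fin 5), σ.support.card = 3 → (σ = c[2,3,4] ∨ σ = c[2,4,3] ∨ σ = c[1,2,3] ∨ σ = c[1,2,4] ∨ σ = c[1,3,2] ∨ σ = c[1,3,4] ∨ σ = c[1,4,2] ∨ σ = c[1,4,3] ∨ σ = c[0,1,2] ∨ σ = c[0,1,3] ∨ σ = c[0,1,4] ∨ σ = c[0,2,1] ∨ σ = c[0,2,3] ∨ σ = c[0,2,4] ∨ σ = c[0,3,1] ∨ σ = c[0,3,2] ∨ σ = c[0,3,4] ∨ σ = c[0,4,1] ∨ σ = c[0,4,2] ∨ σ = c[0,4,3]) := by decide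

theorem genD : Subgroup.closure ({c[1,2,4], c[2,3,4], c[0,4,3,2,1]} : Set (Perm (Fin 5))) = alternatingGroup (Fin 5) := by
  apply le_antisymm
  · rw [Subgroup.closure_le]
    rintro x (rfl|rfl|rfl) <;>
      · show _ ∈ alternatingGroup (Fin 5)
        rw [Equiv.Perm.mem_alternatingGroup]; decide
  · rw [← Equiv.Perm.closure_three_cycles_eq_alternating, Subgroup.closure_le]
    intro σ hσ
    have h3 : σ.support.card = 3 := card_support_eq_three_iff.mpr hσ
    have m0 : (c[1,2,4] : Perm (Fin 5)) ∈ Subgroup.closure ({c[1,2,4], c[2,3,4], c[0,4,3,2,1]} : Set (Perm (Fin 5))) := Subgroup.subset_closure (by simp)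
    have m1 : (c[2,3,4] : Perm (Fin 5)) ∈ Subgroup.closure ({c[1,2,4], c[2,3,4], c[0,4,3,2,1]} : Set (Perm (Fin 5))) := Subgroup.subset_closure (by simp)
    have m2 : (c[0,4,3,2,1] : Perm (Fin 5)) ∈ Subgroup.closure ({c[1,2,4], c[2,3,4], c[0,4,3,2,1]} : Set (Perm (Fin 5))) := Subgroup.subset_closure (by simp)
    rcases genD_cases σ h3 with rfl|rfl|rfl|rfl|rfl|rfl|rfl|rfl|rfl|rfl|rfl|rfl|rfl|rfl|rfl|rfl|rfl|rfl|rfl|rfl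
    · show _ ∈ Subgroup.closure _
      rw [show (c[2,3,4] : Perm (Fin 5)) = c[2,3,4] by decide]
      exact m1
    · show _ ∈ Subgroup.closure _
      rw [show (c[2,4,3] : Perm (Fin 5)) = c[2,3,4]*c[2,3,4] by decide]
      exact mul_mem (m1) m1
    · show _ ∈ Subgroup.closure _
      rw [show (c[1,2,3] : Perm (Fin 5)) = c[1,2,4]*c[2,3,4] by decide]
      exact mul_mem (m0) m1
    · show _ ∈ Subgroup.closure _
      rw [show (c[1,2,4] : Perm (Fin 5)) = c[1,2,4] by decide]
      exact m0
    · show _ ∈ Subgroup.closure _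
      rw [show (c[1,3,2] : Perm (Fin 5)) = c[1,2,4]*c[1,2,4]*c[2,3,4]*c[1,2,4] by decide]
      exact mul_mem (mul_mem (mul_mem (m0) m0) m1) m0
    · show _ ∈ Subgroup.closure _
      rw [show (c[1,3,4] : Perm (Fin 5)) = c[2,3,4]*c[1,2,4] by decide]
      exact mul_mem (m1) m0
    · show _ ∈ Subgroup.closure _
      rw [show (c[1,4,2] : Perm (Fin 5)) = c[1,2,4]*c[1,2,4] by decide]
      exact mul_mem (m0) m0
    · show _ ∈ Subgroup.closure _
      rw [show (c[1,4,3] : Perm (Fin 5)) = c[1,2,4]*c[1,2,4]*c[2,3,4]*c[2,3,4] by decide]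
      exact mul_mem (mul_mem (mul_mem (m0) m0) m1) m1
    · show _ ∈ Subgroup.closure _
      rw [show (c[0,1,2] : Perm (Fin 5)) = c[2,3,4]*c[0,4,3,2,1]*c[2,3,4]*c[0,4,3,2,1] by decide]
      exact mul_mem (mul_mem (mul_mem (m1) m2) m1) m2
    · show _ ∈ Subgroup.closure _
      rw [show (c[0,1,3] : Perm (Fin 5)) = c[1,2,4]*c[1,2,4]*c[0,4,3,2,1]*c[0,4,3,2,1]*c[0,4,3,2,1] by decide]
      exact mul_mem (mul_mem (mul_mem (mul_mem (m0) m0) m2) m2) m2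
    · show _ ∈ Subgroup.closure _
      rw [show (c[0,1,4] : Perm (Fin 5)) = c[1,2,4]*c[0,4,3,2,1]*c[2,3,4]*c[1,2,4] by decide]
      exact mul_mem (mul_mem (mul_mem (m0) m2) m1) m0
    · show _ ∈ Subgroup.closure _
      rw [show (c[0,2,1] : Perm (Fin 5)) = c[2,3,4]*c[0,4,3,2,1] by decide]
      exact mul_mem (m1) m2
    · show _ ∈ Subgroup.closure _
      rw [show (c[0,2,3] : Perm (Fin 5)) = c[2,3,4]*c[0,4,3,2,1]*c[1,2,4]*c[2,3,4] by decide]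
      exact mul_mem (mul_mem (mul_mem (m1) m2) m0) m1
    · show _ ∈ Subgroup.closure _
      rw [show (c[0,2,4] : Perm (Fin 5)) = c[2,3,4]*c[0,4,3,2,1]*c[1,2,4] by decide]
      exact mul_mem (mul_mem (m1) m2) m0
    · show _ ∈ Subgroup.closure _
      rw [show (c[0,3,1] : Perm (Fin 5)) = c[0,4,3,2,1]*c[0,4,3,2,1]*c[1,2,4] by decide]
      exact mul_mem (mul_mem (m2) m2) m0
    · show _ ∈ Subgroup.closure _
      rw [show (c[0,3,2] : Perm (Fin 5)) = c[1,2,4]*c[0,4,3,2,1]*c[0,4,3,2,1] by decide]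
      exact mul_mem (mul_mem (m0) m2) m2
    · show _ ∈ Subgroup.closure _
      rw [show (c[0,3,4] : Perm (Fin 5)) = c[1,2,4]*c[0,4,3,2,1]*c[0,4,3,2,1]*c[2,3,4] by decide]
      exact mul_mem (mul_mem (mul_mem (m0) m2) m2) m1
    · show _ ∈ Subgroup.closure _
      rw [show (c[0,4,1] : Perm (Fin 5)) = c[0,4,3,2,1]*c[2,3,4] by decide]
      exact mul_mem (m2) m1
    · show _ ∈ Subgroup.closure _
      rw [show (c[0,4,2] : Perm (Fin 5)) = c[2,3,4]*c[1,2,4]*c[0,4,3,2,1]*c[0,4,3,2,1] by decide]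
      exact mul_mem (mul_mem (mul_mem (m1) m0) m2) m2
    · show _ ∈ Subgroup.closure _
      rw [show (c[0,4,3] : Perm (Fin 5)) = c[0,4,3,2,1]*c[1,2,4]*c[2,3,4] by decide]
      exact mul_mem (mul_mem (m2) m0) m1

/-- Building data for the example. -/
theorem stmt_16 :
    let g₁ : Perm (Fin 5) := c[1, 3] * c[2, 4]
    let g₂ : Perm (Fin 5) := c[0, 2, 3, 4, 1]
    let g₃ : Perm (Fin 5) := c[0, 1, 2, 3, 4]
    let h₁ : Perm (Fin 5) := c[2, 3, 4]
    let h₂ : Perm (Fin 5) := c[0, 4, 3, 2, 1]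
    let ℓ₁ : Perm (Fin 5) := c[1, 2, 4]
    g₁ * g₂ * g₃ = 1 ∧
    Subgroup.closure ({g₁, g₂, g₃} : Set (Perm (Fin 5))) = alternatingGroup (Fin 5) ∧
    ℓ₁ * ⁅h₁, h₂⁆ = 1 ∧
    Subgroup.closure ({ℓ₁, h₁, h₂} : Set (Perm (Fin 5))) = alternatingGroup (Fin 5) ∧
    ∀ x : Perm (Fin 5),
      (∃ k ∈ alternatingGroup (Fin 5), ∃ g ∈ ({g₁, g₂, g₃} : Set (Perm (Fin 5))),
        x ∈ Subgroup.zpowers (k * g * k⁻¹)) →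
      (∃ k ∈ alternatingGroup (Fin 5), x ∈ Subgroup.zpowers (k * ℓ₁ * k⁻¹)) →
      x = 1 := by
  intro g₁ g₂ g₃ h₁ h₂ ℓ₁
  refine ⟨by decide, genB, by decide, genD, ?_⟩
  intro x hA hB
  obtain ⟨k', -, hx'⟩ := hB
  have h3 : x ^ 3 = 1 := by
    refine aux_pow_one hx' ?_
    rw [show (k' * ℓ₁ * k'⁻¹) ^ 3 = k' * ℓ₁ ^ 3 * k'⁻¹ from conj_pow,
      show ℓ₁ ^ 3 = 1 from by decide]
    group
  obtain ⟨k, -, g, hg, hx⟩ := hA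
  have h10 : x ^ 10 = 1 := by
    rcases hg with rfl | rfl | rfl
    · have h2 : x ^ 2 = 1 := by
        refine aux_pow_one hx ?_
        rw [show (k * g₁ * k⁻¹) ^ 2 = k * g₁ ^ 2 * k⁻¹ from conj_pow,
          show g₁ ^ 2 = 1 from by decide]
        group
      calc x ^ 10 = (x ^ 2) ^ 5 := by rw [← pow_mul]
      _ = 1 := by rw [h2, one_pow]
    · have h5 : x ^ 5 = 1 := by
        refine aux_pow_one hx ?_
        rw [show (k * g₂ * k⁻¹) ^ 5 = k * g₂ ^ 5 * k⁻¹ from conj_pow,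
          show g₂ ^ 5 = 1 from by decide]
        group
      calc x ^ 10 = (x ^ 5) ^ 2 := by rw [← pow_mul]
      _ = 1 := by rw [h5, one_pow]
    · have h5 : x ^ 5 = 1 := by
        refine aux_pow_one hx ?_
        rw [show (k * g₃ * k⁻¹) ^ 5 = k * g₃ ^ 5 * k⁻¹ from conj_pow,
          show g₃ ^ 5 = 1 from by decide]
        group
      calc x ^ 10 = (x ^ 5) ^ 2 := by rw [← pow_mul]
      _ = 1 := by rw [h5, one_pow]
  have h9 : x ^ 9 = 1 := by
    calc x ^ 9 = (x ^ 3) ^ 3 := by rw [← pow_mul]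
    _ = 1 := by rw [h3, one_pow]
  rw [pow_succ, h9, one_mul] at h10
  exact h10
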